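/- For all ideals A and B of R and every e ∈ ℕ, one has A ⊆ B if and only if A^{[p^e]} ⊆ B^{[p^e]}; in particular, taking Frobenius powers reflects containment of ideals in the polynomial ring R. -/

import Mathlib

open Filter

/-- The `q`-th Frobenius power of an ideal `J`:
the ideal generated by the `q`-th powers of the elements of `J`. -/
def frobeniusPower {R : Type*} [CommSemiring R] (J : Ideal R) (q : ℕ) : Ideal R :=
  Ideal.span ((· ^ q) '' (J : Set R))

section Aux

open MvPolynomial

variable {m q : ℕ} {K : Type*} [Field K]

lemma smul_finsupp_injective (hq : q ≠ 0) :
    Function.Injective (fun β : Fin m →₀ ℕ => q • β) := by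
  intro a b h
  ext i
  have := DFunLike.congr_fun h i
  simp only [Finsupp.smul_apply, smul_eq_mul] at this
  exact Nat.eq_of_mul_eq_mul_left (Nat.pos_of_ne_zero hq) this

open scoped Classical in
/-- Additive "trace" splitting of the `q`-th power map on `MvPolynomial`:
sends `monomial (q • β) k` to `monomial β (ψ k)` and kills other monomials. -/
noncomputable def frobTrace (q : ℕ) (ψ : K →+* K) :
    MvPolynomial (Fin m) K →+ MvPolynomial (Fin m) K :=
  (Finsupp.liftAddHom fun γ =>
    { toFun := fun k =>
        if h : ∃ β : Fin m →₀ ℕ, q • β = γ then monomial h.choose (ψ k) else 0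
      map_zero' := by split <;> simp
      map_add' := fun a b => by split <;> simp [map_add] }).comp
    AddMonoidAlgebra.coeffAddEquiv.toAddMonoidHom

open scoped Classical in
lemma frobTrace_monomial (ψ : K →+* K) (γ : Fin m →₀ ℕ) (k : K) :
    frobTrace q ψ (monomial γ k) =
      if h : ∃ β : Fin m →₀ ℕ, q • β = γ then monomial h.choose (ψ k) else 0 := by
  rw [← single_eq_monomial]
  exact (Finsupp.liftAddHom_apply_single _ _ _).trans (by convert rfl; rfl)

lemma frobTrace_monomial_smul (hq : q ≠ 0) (ψ : K →+* K) (β : Fin m →₀ ℕ) (k : K) :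
    frobTrace q ψ (monomial (q • β) k) = monomial β (ψ k) := by
  classical
  rw [frobTrace_monomial, dif_pos ⟨β, rfl⟩]
  have hcb : (⟨β, rfl⟩ : ∃ b : Fin m →₀ ℕ, q • b = q • β).choose = β :=
    smul_finsupp_injective hq (Exists.choose_spec (⟨β, rfl⟩ : ∃ b : Fin m →₀ ℕ, q • b = q • β))
  rw [hcb]

lemma frobTrace_monomial_of_not (ψ : K →+* K) (γ : Fin m →₀ ℕ) (k : K)
    (h : ¬∃ β : Fin m →₀ ℕ, q • β = γ) :
    frobTrace q ψ (monomial γ k) = 0 := by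
  classical
  rw [frobTrace_monomial, dif_neg h]

lemma exists_smul_add_iff (hq : q ≠ 0) (α δ : Fin m →₀ ℕ) :
    (∃ β : Fin m →₀ ℕ, q • β = q • α + δ) ↔ ∃ β : Fin m →₀ ℕ, q • β = δ := by
  constructor
  · rintro ⟨β', hβ'⟩
    have hle : α ≤ β' := by
      intro i
      have := DFunLike.congr_fun hβ' i
      simp only [Finsupp.smul_apply, Finsupp.add_apply, smul_eq_mul] at this
      exact Nat.le_of_mul_le_mul_left (by omega) (Nat.pos_of_ne_zero hq)
    refine ⟨β' - α, ?_⟩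
    apply add_left_cancel (a := q • α)
    rw [← hβ', ← smul_add, add_tsub_cancel_of_le hle]
  · rintro ⟨β, rfl⟩
    exact ⟨α + β, by rw [smul_add]⟩

end Aux

section Key

open MvPolynomial

variable {m : ℕ} (p : ℕ) [Fact p.Prime] (K : Type*) [Field K] [Fintype K] [CharP K p] (e : ℕ)

lemma frobTrace_pow_mul (r s : MvPolynomial (Fin m) K) :
    frobTrace (p ^ e) ((iterateFrobeniusEquiv K p e).symm : K →+* K) (r ^ p ^ e * s) = r * frobTrace (p ^ e) ((iterateFrobeniusEquiv K p e).symm : K →+* K) s := by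
  classical
  have hq : (p ^ e : ℕ) ≠ 0 := pow_ne_zero _ (Fact.out : p.Prime).ne_zero
  induction r using MvPolynomial.induction_on' with
  | add r₁ r₂ h₁ h₂ =>
    rw [add_pow_char_pow, add_mul, map_add, h₁, h₂, add_mul]
  | monomial α c =>
    induction s using MvPolynomial.induction_on' with
    | add s₁ s₂ h₁ h₂ => rw [mul_add, map_add, h₁, h₂, map_add, mul_add]
    | monomial δ d =>
      rw [monomial_pow, monomial_mul]
      by_cases h : ∃ β : Fin m →₀ ℕ, (p ^ e) • β = δ
      · obtain ⟨β, rfl⟩ := h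
        rw [← smul_add, frobTrace_monomial_smul hq, frobTrace_monomial_smul hq,
          monomial_mul]
        congr 1
        rw [map_mul]
        congr 1
        have : c ^ p ^ e = iterateFrobenius K p e c := (iterateFrobenius_def p e c).symm
        rw [this]
        exact (iterateFrobeniusEquiv K p e).symm_apply_apply c
      · rw [frobTrace_monomial_of_not _ _ _ (by
            rwa [exists_smul_add_iff hq]),
          frobTrace_monomial_of_not _ _ _ h, mul_zero]

lemma frobTrace_one : frobTrace (p ^ e) ((iterateFrobeniusEquiv K p e).symm : K →+* K) (1 : MvPolynomial (Fin m) K) = 1 := by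
  have hq : (p ^ e : ℕ) ≠ 0 := pow_ne_zero _ (Fact.out : p.Prime).ne_zero
  have h0 : (1 : MvPolynomial (Fin m) K) = monomial ((p ^ e) • (0 : Fin m →₀ ℕ)) 1 := by
    rw [smul_zero, monomial_zero', C_1]
  rw [h0, frobTrace_monomial_smul hq, map_one]
  simp

end Key

/-- Taking Frobenius powers reflects (and preserves) containment of ideals in a
polynomial ring over a finite field of characteristic `p`:
`A ⊆ B ↔ A^{[p^e]} ⊆ B^{[p^e]}`. -/
theorem le_iff_frobeniusPower_le
    (p : ℕ) (hp : p.Prime) (K : Type*) [Field K] [Fintype K] [CharP K p]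
    (m : ℕ) (A B : Ideal (MvPolynomial (Fin m) K)) (e : ℕ) :
    A ≤ B ↔ frobeniusPower A (p ^ e) ≤ frobeniusPower B (p ^ e) := by
  haveI : Fact p.Prime := ⟨hp⟩
  constructor
  · intro hAB
    exact Ideal.span_mono (Set.image_mono hAB)
  · intro h a ha
    set q := p ^ e with hqdef
    set D := frobTrace (m := m) q ((iterateFrobeniusEquiv K p e).symm : K →+* K) with hD
    have haq : a ^ q ∈ frobeniusPower B q :=
      h (Ideal.subset_span ⟨a, ha, rfl⟩)
    have key : ∀ x ∈ frobeniusPower B q, ∀ s, D (s * x) ∈ B := by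
      intro x hx
      induction hx using Submodule.span_induction with
      | mem x hxmem =>
        obtain ⟨b, hb, rfl⟩ := hxmem
        intro s
        rw [mul_comm, hD, frobTrace_pow_mul]
        exact Ideal.mul_mem_right _ _ hb
      | zero => intro s; rw [mul_zero, map_zero]; exact B.zero_mem
      | add x y hx hy ihx ihy =>
        intro s
        rw [mul_add, map_add]
        exact B.add_mem (ihx s) (ihy s)
      | smul r x hx ih =>
        intro s
        rw [smul_eq_mul, ← mul_assoc]
        exact ih (s * r)
    have := key _ haq 1
    rwa [one_mul, ← mul_one (a ^ q), hD, frobTrace_pow_mul, frobTrace_one, mul_one] at this
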